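/- For every n ∈ ℕ, −β_n = a_{n+2}β_{n+1} + a_{n+4}β_{n+3} + a_{n+6}β_{n+5} + ⋯ (the series converging absolutely). -/

import Mathlib

theorem neg_beta_series (a : ℝ) (ha : Irrational a)
    (aCF : ℕ → ℤ) (ζ : ℕ → ℝ)
    (hζ0 : ζ 0 = a)
    (hfloor : ∀ k, aCF k = ⌊ζ k⌋)
    (hζ : ∀ k, ζ k = (aCF k : ℝ) + 1 / ζ (k + 1))
    (p q : ℕ → ℤ)
    (hq0 : q 0 = 1) (hq1 : q 1 = aCF 1)
    (hqrec : ∀ k, q (k + 2) = aCF (k + 2) * q (k + 1) + q k)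
    (hp0 : p 0 = aCF 0) (hp1 : p 1 = aCF 1 * aCF 0 + 1)
    (hprec : ∀ k, p (k + 2) = aCF (k + 2) * p (k + 1) + p k)
    (β : ℕ → ℝ)
    (hβ : ∀ k, β k = (q k : ℝ) * a - (p k : ℝ)) (n : ℕ) :
    Summable (fun j : ℕ => |(aCF (n + 2 + 2 * j) : ℝ) * β (n + 1 + 2 * j)|) ∧
      -β n = ∑' j : ℕ, (aCF (n + 2 + 2 * j) : ℝ) * β (n + 1 + 2 * j) := by
  -- every ζ k is irrational
  have hirr : ∀ k, Irrational (ζ k) := by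
    intro k
    induction k with
    | zero => rwa [hζ0]
    | succ k ih =>
      have h2 : (ζ (k + 1))⁻¹ = ζ k - (aCF k : ℝ) := by
        rw [hζ k, inv_eq_one_div]; ring
      have h1 : Irrational (ζ (k + 1))⁻¹ := h2 ▸ ih.sub_intCast _
      exact Irrational.of_inv h1
  -- ζ (k+1) > 1
  have hgt : ∀ k, 1 < ζ (k + 1) := by
    intro k
    have h2 : (ζ (k + 1))⁻¹ = Int.fract (ζ k) := by
      have h3 := hζ k
      rw [Int.fract, ← hfloor k, inv_eq_one_div]
      linarith
    have hfp : 0 < (ζ (k + 1))⁻¹ := by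
      rw [h2]
      exact Int.fract_pos.mpr (fun h => (hirr k).ne_int ⌊ζ k⌋ h)
    have hfl : (ζ (k + 1))⁻¹ < 1 := h2 ▸ Int.fract_lt_one _
    have hp : 0 < ζ (k + 1) := inv_pos.mp hfp
    rw [inv_lt_one_iff₀] at hfl
    rcases hfl with h | h
    · linarith
    · exact h
  have hposζ : ∀ k, 0 < ζ (k + 1) := fun k => lt_trans one_pos (hgt k)
  have hne : ∀ k, ζ (k + 1) ≠ 0 := fun k => ne_of_gt (hposζ k)
  -- β recurrence
  have hβrec : ∀ k, β (k + 2) = (aCF (k + 2) : ℝ) * β (k + 1) + β k := by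
    intro k
    rw [hβ, hβ, hβ, hqrec k, hprec k]
    push_cast
    ring
  -- β 0 = 1 / ζ 1
  have hβ0 : β 0 = 1 / ζ 1 := by
    have h := hζ 0
    rw [hζ0] at h
    simp only [zero_add] at h
    rw [hβ 0, hq0, hp0, h]
    push_cast
    ring
  -- key identity
  have key : ∀ k, β (k + 1) = -β k / ζ (k + 2) := by
    intro k
    induction k with
    | zero =>
      have h1 := hζ 1
      have hb1 : β 1 = (aCF 1 : ℝ) * β 0 - 1 := by
        rw [hβ 1, hβ 0, hq1, hp1, hq0, hp0]
        push_cast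
        ring
      have h2 : (aCF 1 : ℝ) = ζ 1 - 1 / ζ 2 := by rw [h1]; ring
      have z1 : ζ 1 ≠ 0 := hne 0
      have z2 : ζ 2 ≠ 0 := hne 1
      rw [hb1, hβ0, h2]
      field_simp
      ring
    | succ k ih =>
      have h2 : (aCF (k + 2) : ℝ) = ζ (k + 2) - 1 / ζ (k + 3) := by
        rw [hζ (k + 2)]; ring
      have z2 : ζ (k + 2) ≠ 0 := hne (k + 1)
      have z3 : ζ (k + 3) ≠ 0 := hne (k + 2)
      rw [hβrec k, ih, h2]
      field_simp
      ring
  -- sign of β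
  have hsign : ∀ k, 0 < (-1 : ℝ) ^ k * β k := by
    intro k
    induction k with
    | zero =>
      simpa [hβ0] using one_div_pos.mpr (hposζ 0)
    | succ k ih =>
      rw [key k]
      have : (-1 : ℝ) ^ (k + 1) * (-β k / ζ (k + 2)) =
          ((-1 : ℝ) ^ k * β k) / ζ (k + 2) := by ring
      rw [this]
      exact div_pos ih (hposζ (k + 1))
  have hβne : ∀ k, β k ≠ 0 := by
    intro k h
    have := hsign k
    rw [h, mul_zero] at this
    exact lt_irrefl 0 this
  -- decay
  have hdecay : ∀ k, |β (k + 2)| ≤ |β k| / 2 := by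
    intro k
    have hb2 : β (k + 2) = β k / (ζ (k + 2) * ζ (k + 3)) := by
      have z2 : ζ (k + 2) ≠ 0 := hne (k + 1)
      have z3 : ζ (k + 3) ≠ 0 := hne (k + 2)
      have k1 : β (k + 2) = -β (k + 1) / ζ (k + 3) := key (k + 1)
      rw [k1, key k]
      field_simp
    have hage : (1 : ℝ) ≤ (aCF (k + 2) : ℝ) := by
      have : (1 : ℤ) ≤ aCF (k + 2) := by
        rw [hfloor]
        exact Int.le_floor.mpr (by exact_mod_cast (hgt (k + 1)).le)
      exact_mod_cast this
    have hprod : (2 : ℝ) ≤ ζ (k + 2) * ζ (k + 3) := by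
      have h3 : ζ (k + 2) = (aCF (k + 2) : ℝ) + 1 / ζ (k + 3) := hζ (k + 2)
      have h4 : ζ (k + 2) * ζ (k + 3) = (aCF (k + 2) : ℝ) * ζ (k + 3) + 1 := by
        have z3 : ζ (k + 3) ≠ 0 := hne (k + 2)
        rw [h3]
        field_simp
      nlinarith [hgt (k + 2), hage]
    rw [hb2, abs_div, abs_of_pos (by positivity : (0:ℝ) < ζ (k + 2) * ζ (k + 3))]
    exact div_le_div_of_nonneg_left (abs_nonneg _) (by norm_num) hprod
  have hdecayN : ∀ N, |β (n + 2 * N)| ≤ |β n| * (1 / 2) ^ N := by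
    intro N
    induction N with
    | zero => simp
    | succ N ih =>
      have e : n + 2 * (N + 1) = (n + 2 * N) + 2 := by ring
      rw [e]
      calc |β ((n + 2 * N) + 2)| ≤ |β (n + 2 * N)| / 2 := hdecay _
        _ ≤ (|β n| * (1 / 2) ^ N) / 2 := by linarith
        _ = |β n| * (1 / 2) ^ (N + 1) := by ring
  -- partial sums telescope
  set f : ℕ → ℝ := fun j => (aCF (n + 2 + 2 * j) : ℝ) * β (n + 1 + 2 * j) with hf
  have hterm : ∀ j, f j = β (n + 2 * (j + 1)) - β (n + 2 * j) := by
    intro j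
    have e1 : n + 2 * (j + 1) = (n + 2 * j) + 2 := by ring
    have e2 : n + 2 + 2 * j = (n + 2 * j) + 2 := by ring
    have e3 : n + 1 + 2 * j = (n + 2 * j) + 1 := by ring
    rw [hf]
    simp only [e1, e2, e3, hβrec (n + 2 * j)]
    ring
  have hPsum : ∀ N, ∑ j ∈ Finset.range N, f j = β (n + 2 * N) - β n := by
    intro N
    induction N with
    | zero => simp
    | succ N ih =>
      rw [Finset.sum_range_succ, ih, hterm N]
      ring
  -- absolute value of each term
  have habs : ∀ j, |f j| = |β (n + 2 * j)| - |β (n + 2 * (j + 1))| := by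
    intro j
    have hsg1 : (-1 : ℝ) ^ n * β (n + 2 * j) = |β (n + 2 * j)| := by
      have h1 := hsign (n + 2 * j)
      have e : (-1 : ℝ) ^ (n + 2 * j) = (-1 : ℝ) ^ n := by
        rw [pow_add, pow_mul]
        norm_num
      rw [e] at h1
      rcases Nat.even_or_odd n with he | ho
      · rw [he.neg_one_pow] at h1 ⊢
        rw [one_mul] at h1 ⊢
        exact (abs_of_pos h1).symm
      · rw [ho.neg_one_pow] at h1 ⊢
        have : β (n + 2 * j) < 0 := by linarith [h1]
        rw [abs_of_neg this]
        ring
    have hsg2 : (-1 : ℝ) ^ n * β (n + 2 * (j + 1)) = |β (n + 2 * (j + 1))| := by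
      have h1 := hsign (n + 2 * (j + 1))
      have e : (-1 : ℝ) ^ (n + 2 * (j + 1)) = (-1 : ℝ) ^ n := by
        rw [pow_add, pow_mul]
        norm_num
      rw [e] at h1
      rcases Nat.even_or_odd n with he | ho
      · rw [he.neg_one_pow] at h1 ⊢
        rw [one_mul] at h1 ⊢
        exact (abs_of_pos h1).symm
      · rw [ho.neg_one_pow] at h1 ⊢
        have : β (n + 2 * (j + 1)) < 0 := by linarith [h1]
        rw [abs_of_neg this]
        ring
    have hle : |β (n + 2 * (j + 1))| ≤ |β (n + 2 * j)| := by
      have e : n + 2 * (j + 1) = (n + 2 * j) + 2 := by ring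
      rw [e]
      have := hdecay (n + 2 * j)
      have h0 := abs_nonneg (β (n + 2 * j))
      linarith
    have hsq : ((-1 : ℝ) ^ n) * ((-1 : ℝ) ^ n) = 1 := by
      rw [← pow_add]
      exact Even.neg_one_pow ⟨n, rfl⟩
    have h5 : β (n + 2 * (j + 1)) - β (n + 2 * j) =
        (-1 : ℝ) ^ n * (|β (n + 2 * (j + 1))| - |β (n + 2 * j)|) := by
      rw [← hsg1, ← hsg2]
      linear_combination (β (n + 2 * j) - β (n + 2 * (j + 1))) * hsq
    rw [hterm j, h5, abs_mul, abs_pow, abs_neg, abs_one, one_pow, one_mul,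
      abs_of_nonpos (by linarith)]
    ring
  have hPabs : ∀ N, ∑ j ∈ Finset.range N, |f j| = |β n| - |β (n + 2 * N)| := by
    intro N
    induction N with
    | zero => simp
    | succ N ih =>
      rw [Finset.sum_range_succ, ih, habs N]
      ring
  -- summability
  have hsummable : Summable (fun j => |f j|) := by
    apply summable_of_sum_range_le (c := |β n|) (fun j => abs_nonneg _)
    intro N
    rw [hPabs N]
    linarith [abs_nonneg (β (n + 2 * N))]
  refine ⟨hsummable, ?_⟩
  -- convergence of partial sums to -β n
  have hsf : Summable f := hsummable.of_abs
  have h1 : Filter.Tendsto (fun N => ∑ j ∈ Finset.range N, f j)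
      Filter.atTop (nhds (∑' j, f j)) := hsf.hasSum.tendsto_sum_nat
  have h2 : Filter.Tendsto (fun N => β (n + 2 * N)) Filter.atTop (nhds 0) := by
    have hb : Filter.Tendsto (fun N : ℕ => |β n| * (1 / 2) ^ N) Filter.atTop (nhds 0) := by
      have := (tendsto_pow_atTop_nhds_zero_of_lt_one (by norm_num : (0:ℝ) ≤ 1/2)
        (by norm_num : (1:ℝ)/2 < 1)).const_mul (|β n|)
      simpa using this
    exact squeeze_zero_norm (fun N => by simpa [Real.norm_eq_abs] using hdecayN N) hb
  have h3 : Filter.Tendsto (fun N => ∑ j ∈ Finset.range N, f j)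
      Filter.atTop (nhds (-β n)) := by
    have : Filter.Tendsto (fun N => β (n + 2 * N) - β n) Filter.atTop
        (nhds (0 - β n)) := h2.sub_const _
    rw [zero_sub] at this
    exact (Filter.tendsto_congr (fun N => (hPsum N).symm)).mp this
  exact tendsto_nhds_unique h3 h1
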